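/- For a convex function f on [0,1], f(1/n) ≤ (1/n²) ∑ i f(p i) + ((n-1)/n²) ∑ i f(q i), where q i = (1 - p i)/(n-1). Equality holds when all p i = 1/n. -/

import Mathlib

theorem jensen_sum_convex
    (n : ℕ) (hn : 2 ≤ n) (p : Fin n → ℝ)
    (hp : ∀ i, 0 ≤ p i ∧ p i ≤ 1) (hsum : ∑ i, p i = 1)
    (f : ℝ → ℝ) (hf : ConvexOn ℝ (Set.Icc (0 : ℝ) 1) f) :
    f (1 / (n : ℝ)) ≤
      (1 / (n : ℝ) ^ 2) * ∑ i, f (p i) +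
        (((n : ℝ) - 1) / (n : ℝ) ^ 2) * ∑ i, f ((1 - p i) / ((n : ℝ) - 1)) ∧
    ((∀ i, p i = 1 / (n : ℝ)) →
      f (1 / (n : ℝ)) =
        (1 / (n : ℝ) ^ 2) * ∑ i, f (p i) +
          (((n : ℝ) - 1) / (n : ℝ) ^ 2) * ∑ i, f ((1 - p i) / ((n : ℝ) - 1))) := by
  have hn1 : (1 : ℝ) < (n : ℝ) := by exact_mod_cast Nat.lt_of_lt_of_le one_lt_two hn
  have hn0 : (0 : ℝ) < (n : ℝ) := lt_trans one_pos hn1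
  have hn1' : (0 : ℝ) < (n : ℝ) - 1 := by linarith
  have hn2 : (2:ℝ) ≤ (n:ℝ) := by exact_mod_cast hn
  set w : Fin n ⊕ Fin n → ℝ := fun x => Sum.elim (fun _ => 1 / (n:ℝ)^2)
    (fun _ => ((n:ℝ) - 1) / (n:ℝ)^2) x with hw
  set z : Fin n ⊕ Fin n → ℝ := fun x => Sum.elim (fun i => p i)
    (fun i => (1 - p i) / ((n:ℝ) - 1)) x with hz
  have hwsum : ∑ x, w x = 1 := by
    rw [Fintype.sum_sum_type]
    simp [hw, Finset.sum_const]
    field_simp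
    ring
  have hzsum : ∑ x, w x • z x = 1 / (n : ℝ) := by
    rw [Fintype.sum_sum_type]
    simp only [hw, hz, Sum.elim_inl, Sum.elim_inr, smul_eq_mul]
    rw [← Finset.mul_sum, ← Finset.mul_sum]
    have : ∑ i : Fin n, (1 - p i) / ((n:ℝ) - 1) = 1 := by
      rw [← Finset.sum_div, Finset.sum_sub_distrib, hsum]
      simp
      field_simp
      exact hn1'.ne'
    rw [this, hsum]
    field_simp
    ring
  have key := hf.map_sum_le (t := Finset.univ) (w := w) (p := z)
    (fun x _ => by
      rcases x with i | i <;> simp [hw] <;> positivity)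
    (by simpa using hwsum)
    (fun x _ => by
      rcases x with i | i
      · exact Set.mem_Icc.2 ⟨(hp i).1, (hp i).2⟩
      · simp only [hz, Sum.elim_inr]
        constructor
        · apply div_nonneg _ (le_of_lt hn1'); linarith [(hp i).2]
        · rw [div_le_one hn1']; linarith [(hp i).1, hn2])
  rw [hzsum, Fintype.sum_sum_type] at key
  simp only [hw, hz, Sum.elim_inl, Sum.elim_inr, smul_eq_mul] at key
  rw [← Finset.mul_sum, ← Finset.mul_sum] at key
  refine ⟨key, fun hpi => ?_⟩
  have hq : ∀ i : Fin n, (1 - p i) / ((n:ℝ) - 1) = 1 / (n:ℝ) := by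
    intro i; rw [hpi i]; field_simp
  have h1 : ∑ i, f (p i) = n * f (1/(n:ℝ)) := by
    simp [hpi, Finset.sum_const, mul_comm]
  have h2 : ∑ i, f ((1 - p i)/((n:ℝ)-1)) = n * f (1/(n:ℝ)) := by
    simp only [hq]
    simp [Finset.sum_const, mul_comm]
  rw [h1, h2]
  field_simp
  ring
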